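/- For every even integer n ≥ 6, the area of the regular small n-gon, namely (n/8)·sin(2π/n), is strictly less than the Foster–Szabo bound (n/2)·sin(π/n) − ((n−1)/2)·tan(π/(2n−2)). -/

import Mathlib

open Real
set_option maxHeartbeats 1000000

private lemma poly_aux {y : ℝ} (h0 : 0 < y) (h1 : y ≤ 53 / 100) :
    1 < (1 - y ^ 2 / 6 - y ^ 3 * (5 / 96)) * (1 + y ^ 2 / 2 - y ^ 4 * (5 / 96))
      * (1 - 19 / 100 * y ^ 2) := by
  have h0' : (0:ℝ) ≤ y := le_of_lt h0
  have p2 : y ^ 2 ≤ (53/100) ^ 2 := pow_le_pow_left₀ h0' h1 2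
  have p3 : y ^ 3 ≤ (53/100) ^ 3 := pow_le_pow_left₀ h0' h1 3
  have p6 : y ^ 6 ≤ (53/100) ^ 6 := pow_le_pow_left₀ h0' h1 6
  have p7 : y ^ 7 ≤ (53/100) ^ 7 := pow_le_pow_left₀ h0' h1 7
  have q4 : (0:ℝ) ≤ y ^ 4 := by positivity
  have q5 : (0:ℝ) ≤ y ^ 5 := by positivity
  have hQ : 0 < 43/300 - 5/96*y - 159/800*y^2 - 31/1920*y^3 + 991/28800*y^4
      + 353/46080*y^5 - 19/11520*y^6 - 19/36864*y^7 := by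
    nlinarith [p2, p3, p6, p7, q4, q5, h1]
  have hy2 : (0:ℝ) < y ^ 2 := by positivity
  have hfac : (1 - y ^ 2 / 6 - y ^ 3 * (5 / 96)) * (1 + y ^ 2 / 2 - y ^ 4 * (5 / 96))
      * (1 - 19 / 100 * y ^ 2) - 1
      = y ^ 2 * (43/300 - 5/96*y - 159/800*y^2 - 31/1920*y^3 + 991/28800*y^4
      + 353/46080*y^5 - 19/11520*y^6 - 19/36864*y^7) := by ring
  nlinarith [mul_pos hy2 hQ, hfac]

theorem regular_ngon_lt_foster_szabo (n : ℕ) (hn : 6 ≤ n) (he : Even n) :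
    (n : ℝ) / 8 * Real.sin (2 * π / n) <
      (n : ℝ) / 2 * Real.sin (π / n) - ((n : ℝ) - 1) / 2 * Real.tan (π / (2 * n - 2)) := by
  have hn6 : (6:ℝ) ≤ (n:ℝ) := by exact_mod_cast hn
  set N : ℝ := (n:ℝ) with hN
  have hNpos : (0:ℝ) < N := by linarith
  have hpi : 0 < π := pi_pos
  have hpilt : π < 3.15 := by linarith [pi_lt_d2]
  set x := π / N with hxdef
  have hx0 : 0 < x := div_pos hpi hNpos
  have hxle : x ≤ 53 / 100 := by
    rw [hxdef, div_le_iff₀ hNpos]; nlinarith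
  have hxN : N * x = π := by rw [hxdef]; field_simp
  have hMpos : (0:ℝ) < 2 * N - 2 := by linarith
  set t := π / (2 * N - 2) with htdef
  have ht0 : 0 < t := div_pos hpi hMpos
  have htx : t ≤ 3 / 5 * x := by
    rw [htdef, hxdef, show (3:ℝ) / 5 * (π / N) = 3 * π / (5 * N) by ring,
      div_le_div_iff₀ hMpos (by positivity)]
    nlinarith
  have htM : (N - 1) / 2 * t = π / 4 := by
    rw [htdef]; field_simp [hMpos.ne', (show (0:ℝ) < N - 1 by linarith).ne']; ring
  -- Taylor bounds
  have hxabs : |x| ≤ 1 := by rw [abs_of_pos hx0]; linarith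
  have htabs : |t| ≤ 1 := by rw [abs_of_pos ht0]; nlinarith
  have hs := abs_le.1 (Real.sin_bound hxabs)
  rw [abs_of_pos hx0] at hs
  have hsin : x - x ^ 3 / 6 - x ^ 4 * (5 / 96) ≤ Real.sin x := by
    nlinarith [hs.1, mul_le_mul_of_nonneg_left hxle (by positivity : (0:ℝ) ≤ x ^ 4)]
  have hc := abs_le.1 (Real.cos_bound hxabs)
  rw [abs_of_pos hx0] at hc
  have hcos : Real.cos x ≤ 1 - x ^ 2 / 2 + x ^ 4 * (5 / 96) := by linarith [hc.2]
  have hct := abs_le.1 (Real.cos_bound htabs)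
  rw [abs_of_pos ht0] at hct
  have ht2 : t ^ 2 ≤ 9 / 25 * x ^ 2 := by nlinarith
  have hx2 : x ^ 2 ≤ 2809 / 10000 := by nlinarith
  have ht4 : t ^ 4 ≤ (9 / 25 * x ^ 2) ^ 2 := by
    calc t ^ 4 = t ^ 2 * t ^ 2 := by ring
    _ ≤ 9 / 25 * x ^ 2 * (9 / 25 * x ^ 2) := by
        apply mul_le_mul ht2 ht2 (sq_nonneg t) (by positivity)
    _ = (9 / 25 * x ^ 2) ^ 2 := by ring
  have hcost : 1 - 19 / 100 * x ^ 2 ≤ Real.cos t := by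
    nlinarith [hct.1, sq_nonneg t, sq_nonneg x]
  have hden : (0:ℝ) < 1 - 19 / 100 * x ^ 2 := by nlinarith
  have hsint : Real.sin t < t := Real.sin_lt ht0
  have hcostpos : 0 < Real.cos t := lt_of_lt_of_le hden hcost
  -- tangent bound
  have htan : Real.tan t < t / (1 - 19 / 100 * x ^ 2) := by
    rw [Real.tan_eq_sin_div_cos]
    exact div_lt_div₀ hsint hcost (le_of_lt ht0) hden
  -- bound the right term
  have hR : (N - 1) / 2 * Real.tan t < (π / 4) / (1 - 19 / 100 * x ^ 2) := by
    have h1 : (N - 1) / 2 * Real.tan t < (N - 1) / 2 * (t / (1 - 19 / 100 * x ^ 2)) := by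
      apply mul_lt_mul_of_pos_left htan; linarith
    have h2 : (N - 1) / 2 * (t / (1 - 19 / 100 * x ^ 2)) = (π / 4) / (1 - 19 / 100 * x ^ 2) := by
      rw [mul_div_assoc', htM]
    linarith
  -- bound the left side
  have hLBpos : (0:ℝ) < x - x ^ 3 / 6 - x ^ 4 * (5 / 96) := by nlinarith
  have hBpos : (0:ℝ) < 1 + x ^ 2 / 2 - x ^ 4 * (5 / 96) := by nlinarith
  have h2cos : 1 + x ^ 2 / 2 - x ^ 4 * (5 / 96) ≤ 2 - Real.cos x := by linarith
  have hsinpos : 0 < Real.sin x := lt_of_lt_of_le hLBpos hsin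
  have hmul : (x - x ^ 3 / 6 - x ^ 4 * (5 / 96)) * (1 + x ^ 2 / 2 - x ^ 4 * (5 / 96))
      ≤ Real.sin x * (2 - Real.cos x) :=
    mul_le_mul hsin h2cos (le_of_lt hBpos) (le_of_lt hsinpos)
  have hL : π / 4 * ((1 - x ^ 2 / 6 - x ^ 3 * (5 / 96)) * (1 + x ^ 2 / 2 - x ^ 4 * (5 / 96)))
      ≤ N / 2 * Real.sin x - N / 4 * (Real.sin x * Real.cos x) := by
    have e1 : N / 2 * Real.sin x - N / 4 * (Real.sin x * Real.cos x)
        = N / 4 * (Real.sin x * (2 - Real.cos x)) := by ring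
    have e2 : π / 4 * ((1 - x ^ 2 / 6 - x ^ 3 * (5 / 96)) * (1 + x ^ 2 / 2 - x ^ 4 * (5 / 96)))
        = N / 4 * ((x - x ^ 3 / 6 - x ^ 4 * (5 / 96)) * (1 + x ^ 2 / 2 - x ^ 4 * (5 / 96))) := by
      rw [← hxN]; ring
    rw [e1, e2]
    exact mul_le_mul_of_nonneg_left hmul (by positivity)
  -- the key polynomial inequality
  have hkey : (π / 4) / (1 - 19 / 100 * x ^ 2)
      < π / 4 * ((1 - x ^ 2 / 6 - x ^ 3 * (5 / 96)) * (1 + x ^ 2 / 2 - x ^ 4 * (5 / 96))) := by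
    rw [div_lt_iff₀ hden]
    have hpoly := poly_aux hx0 hxle
    have h3 := mul_lt_mul_of_pos_left hpoly (show (0:ℝ) < π / 4 by positivity)
    calc π / 4 = π / 4 * 1 := by ring
    _ < π / 4 * ((1 - x ^ 2 / 6 - x ^ 3 * (5 / 96)) * (1 + x ^ 2 / 2 - x ^ 4 * (5 / 96))
        * (1 - 19 / 100 * x ^ 2)) := h3
    _ = π / 4 * ((1 - x ^ 2 / 6 - x ^ 3 * (5 / 96)) * (1 + x ^ 2 / 2 - x ^ 4 * (5 / 96)))
        * (1 - 19 / 100 * x ^ 2) := by ring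
  -- assemble
  have hgoal2 : 2 * π / N = 2 * x := by rw [hxdef]; ring
  rw [hgoal2, Real.sin_two_mul]
  have heq : N / 8 * (2 * Real.sin x * Real.cos x) = N / 4 * (Real.sin x * Real.cos x) := by ring
  rw [heq]
  linarith
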